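/- Let i, j be positive integers such that both i/gcd(i,j) and j/gcd(i,j) are odd. Then 3·⟨𝒞_i, 𝒞_j⟩ = gcd(i,j)⁴/(i²·j²). In particular, ⟨𝒞_i, 𝒞_i⟩ = 1/3 for every i ∈ ℕ. -/

import Mathlib

open MeasureTheory Filter Topology

/-- The 1-periodic piecewise linear "cosine-like" function:
`𝒞(x) = 4|x - 1/2| - 1` on `[0,1]`, extended by `𝒞(x) = 𝒞(x - ⌊x⌋)`. -/
noncomputable def Cfun (x : ℝ) : ℝ := 4 * |Int.fract x - 1 / 2| - 1

/-- The 1-periodic piecewise linear "sine-like" function: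
`𝒮(x) = |2 - 4|x - 1/4|| - 1` on `[0,1]`, extended by `𝒮(x) = 𝒮(x - ⌊x⌋)`. -/
noncomputable def Sfun (x : ℝ) : ℝ := abs (2 - 4 * |Int.fract x - 1 / 4|) - 1


lemma Cfun_add_int (x : ℝ) (n : ℤ) : Cfun (x + n) = Cfun x := by
  simp [Cfun, Int.fract_add_intCast]

lemma Cfun_add_nat (x : ℝ) (n : ℕ) : Cfun (x + n) = Cfun x := by
  simpa using Cfun_add_int x n

lemma Cfun_fract (x : ℝ) : Cfun (Int.fract x) = Cfun x := by
  simp [Cfun, Int.fract_fract]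

lemma Cfun_abs_le (x : ℝ) : |Cfun x| ≤ 1 := by
  have h1 : |Int.fract x - 1/2| ≤ 1/2 := by
    rw [abs_le]
    constructor <;> nlinarith [Int.fract_nonneg x, Int.fract_lt_one x]
  rw [Cfun, abs_le]; constructor <;> nlinarith [abs_nonneg (Int.fract x - 1/2)]

lemma Cfun_measurable : Measurable Cfun := by
  unfold Cfun
  exact (((measurable_fract.sub measurable_const).abs.const_mul 4).sub measurable_const)

lemma lemA (m : ℕ) (t : ℝ) (h0 : 0 ≤ t) (h1 : t < 1) :
    ∑ r ∈ Finset.range (2*m+1), |t + r - m - 1/2| = |t - 1/2| + m*(m+1) := by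
  induction m with
  | zero => simp
  | succ m ih =>
    have e1 : 2*(m+1)+1 = (2*m+2)+1 := by ring
    rw [e1, Finset.sum_range_succ, Finset.sum_range_succ']
    have e2 : ∀ r : ℕ, |t + ((r:ℝ)+1) - (m+1:ℕ) - 1/2| = |t + r - m - 1/2| := by
      intro r; push_cast; ring_nf
    simp only [Nat.cast_add, Nat.cast_one]
    have e3 : (∑ r ∈ Finset.range (2*m+1), |t + ((r:ℝ)+1) - ((m:ℝ)+1) - 1/2|)
        = ∑ r ∈ Finset.range (2*m+1), |t + r - m - 1/2| := by
      apply Finset.sum_congr rfl; intro r _; ring_nf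
    rw [e3, ih]
    have f0 : |t + ((0:ℕ):ℝ) - ((m:ℝ)+1) - 1/2| = (m:ℝ) + 3/2 - t := by
      rw [Nat.cast_zero, abs_of_neg (by linarith)]; ring
    have f2 : |t + ((2*m+2:ℕ):ℝ) - ((m:ℝ)+1) - 1/2| = t + m + 1/2 := by
      push_cast
      rw [show t + (2*(m:ℝ)+2) - ((m:ℝ)+1) - 1/2 = t + m + 1/2 by ring,
        abs_of_pos (by positivity)]
    push_cast at f0 f2 ⊢
    rw [f0, f2]; ring


lemma sum_range_zmod (a : ℕ) [NeZero a] (G : ZMod a → ℝ) :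
    ∑ r ∈ Finset.range a, G (r : ZMod a) = ∑ z : ZMod a, G z := by
  refine Finset.sum_nbij' (i := fun r => (r : ZMod a)) (j := fun z => z.val) ?_ ?_ ?_ ?_ ?_
  · intro r _; exact Finset.mem_univ _
  · intro z _; exact Finset.mem_range.2 (ZMod.val_lt z)
  · intro r hr; exact ZMod.val_natCast_of_lt (Finset.mem_range.1 hr)
  · intro z _; exact ZMod.natCast_rightInverse z
  · intro r _; rfl

lemma Cfun_key (a : ℕ) [NeZero a] (c : ℝ) (n : ℤ) :
    Cfun ((c + n)/a) = Cfun ((c + ((n : ZMod a).val : ℝ))/a) := by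
  have h : (((n : ZMod a).val : ℤ)) = n % a := ZMod.val_intCast n
  have ha : (a:ℝ) ≠ 0 := Nat.cast_ne_zero.2 (NeZero.ne a)
  have hn : (n:ℝ) = ((n : ZMod a).val : ℝ) + (a:ℝ) * ((n / a : ℤ):ℝ) := by
    have h2 := congrArg (Int.cast : ℤ → ℝ) (Int.emod_add_mul_ediv n a)
    have h3 : ((n : ZMod a).val : ℝ) = (((n % a : ℤ)) : ℝ) := by exact_mod_cast congrArg (Int.cast : ℤ → ℝ) h
    push_cast at h2 h3 ⊢
    linarith
  rw [show (c + n)/a = (c + ((n : ZMod a).val : ℝ))/a + ((n / a : ℤ):ℝ) by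
    rw [hn]; field_simp; ring, Cfun_add_int]

lemma sum_perm (a b : ℕ) (ha : 0 < a) (hab : Nat.Coprime b a) (k : ℤ) (c : ℝ) :
    ∑ r ∈ Finset.range a, Cfun ((c + ((b * r : ℕ) + k : ℤ))/a) =
    ∑ r ∈ Finset.range a, Cfun ((c + (r : ℝ))/a) := by
  haveI : NeZero a := ⟨ha.ne'⟩
  set h : ZMod a → ℝ := fun z => Cfun ((c + (z.val : ℝ))/a) with hh
  have L1 : ∑ r ∈ Finset.range a, Cfun ((c + ((b * r : ℕ) + k : ℤ))/a)
      = ∑ z : ZMod a, h ((b : ZMod a) * z + k) := by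
    rw [← sum_range_zmod a (fun z => h ((b : ZMod a) * z + k))]
    apply Finset.sum_congr rfl; intro r _
    rw [Cfun_key a c ((b * r : ℕ) + k : ℤ)]
    congr 2
    push_cast; ring
  have L2 : ∑ r ∈ Finset.range a, Cfun ((c + (r : ℝ))/a) = ∑ z : ZMod a, h z := by
    rw [← sum_range_zmod a h]
    apply Finset.sum_congr rfl; intro r _
    have := Cfun_key a c (r : ℤ)
    push_cast at this
    rw [this]
  rw [L1, L2]
  set u := ZMod.unitOfCoprime b hab
  have e : ∀ z : ZMod a, (b : ZMod a) * z + k = (Units.mulLeft u).trans (Equiv.addRight (k : ZMod a)) z := by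
    intro z; simp [u, Units.mulLeft, ZMod.coe_unitOfCoprime]
  simp_rw [e]
  exact Equiv.sum_comp _ h

lemma dist_rel (m : ℕ) (y : ℝ) :
    ∑ r ∈ Finset.range (2*m+1), Cfun ((y + r)/((2*m+1:ℕ):ℝ)) = Cfun y / ((2*m+1:ℕ):ℝ) := by
  set a : ℕ := 2*m+1 with ha
  clear_value a
  have hapos : 0 < a := by omega
  have hcast : (a:ℝ) = 2*(m:ℝ)+1 := by rw [ha]; push_cast; ring
  have har : (0:ℝ) < a := by positivity
  obtain ⟨t, ht0, ht1, hyt⟩ : ∃ t, 0 ≤ t ∧ t < 1 ∧ y = t + (⌊y⌋:ℝ) :=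
    ⟨Int.fract y, Int.fract_nonneg y, Int.fract_lt_one y, by rw [Int.fract]; ring⟩
  have hCy : Cfun y = Cfun t := by rw [hyt, Cfun_add_int]
  have step1 : ∑ r ∈ Finset.range a, Cfun ((y + r)/(a:ℝ))
      = ∑ r ∈ Finset.range a, Cfun ((t + r)/(a:ℝ)) := by
    have hperm := sum_perm a 1 hapos (Nat.coprime_one_left a) ⌊y⌋ t
    rw [← hperm]
    apply Finset.sum_congr rfl; intro r _
    congr 1
    push_cast
    linear_combination hyt / (a:ℝ)
  rw [step1, hCy]
  have step2 : ∀ r ∈ Finset.range a, Cfun ((t + r)/(a:ℝ))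
      = 4 * (|t + r - m - 1/2| / a) - 1 := by
    intro r hr
    have hrc : (r:ℝ) + 1 ≤ a := by exact_mod_cast Finset.mem_range.1 hr
    have h0 : 0 ≤ (t + r)/(a:ℝ) := by positivity
    have h1 : (t + r)/(a:ℝ) < 1 := by rw [div_lt_one har]; linarith
    rw [Cfun, Int.fract_eq_self.2 ⟨h0, h1⟩]
    have he : (t + r)/(a:ℝ) - 1/2 = (t + r - m - 1/2)/a := by
      rw [hcast]; field_simp; ring
    rw [he, abs_div, abs_of_pos har]
  rw [Finset.sum_congr rfl step2, Finset.sum_sub_distrib, Finset.sum_const,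
    Finset.card_range, ← Finset.mul_sum, ← Finset.sum_div]
  rw [show Finset.range a = Finset.range (2*m+1) by rw [ha], lemA m t ht0 ht1]
  have hCt : Cfun t = 4 * |t - 1/2| - 1 := by
    rw [Cfun, Int.fract_eq_self.2 ⟨ht0, ht1⟩]
  rw [hCt]
  simp only [nsmul_eq_mul, mul_one]
  rw [hcast]
  field_simp
  ring

lemma Cprod_intable (p q e f c d : ℝ) :
    IntervalIntegrable (fun x => Cfun (p*x+e) * Cfun (q*x+f)) MeasureTheory.volume c d := by
  have hm : Measurable fun x => Cfun (p*x+e) * Cfun (q*x+f) :=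
    (Cfun_measurable.comp ((measurable_const_mul p).add_const e)).mul
      (Cfun_measurable.comp ((measurable_const_mul q).add_const f))
  apply (intervalIntegrable_const (c := (1:ℝ))).mono_fun' hm.aestronglyMeasurable.restrict
  filter_upwards with x
  have h1 := Cfun_abs_le (p*x+e)
  have h2 := Cfun_abs_le (q*x+f)
  have : ‖Cfun (p*x+e) * Cfun (q*x+f)‖ = |Cfun (p*x+e)| * |Cfun (q*x+f)| := by
    rw [Real.norm_eq_abs, abs_mul]
  rw [this]
  nlinarith [abs_nonneg (Cfun (p*x+e)), abs_nonneg (Cfun (q*x+f))]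

lemma int_sum (g : ℕ) (F : ℝ → ℝ)
    (hFi : ∀ c d : ℝ, IntervalIntegrable F MeasureTheory.volume c d) :
    ∫ u in (0:ℝ)..(g:ℝ), F u = ∑ r ∈ Finset.range g, ∫ u in (0:ℝ)..1, F (u + r) := by
  have h := intervalIntegral.sum_integral_adjacent_intervals
    (a := fun k : ℕ => (k:ℝ)) (n := g) (μ := MeasureTheory.volume) (f := F)
    (fun k _ => hFi ((k:ℕ):ℝ) (((k+1:ℕ)):ℝ))
  norm_num at h
  rw [← h]
  apply Finset.sum_congr rfl; intro r _
  rw [intervalIntegral.integral_comp_add_right F (r:ℝ), zero_add, add_comm]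

lemma scale_eq (g : ℕ) (hg : 0 < g) (F : ℝ → ℝ)
    (hFi : ∀ c d : ℝ, IntervalIntegrable F MeasureTheory.volume c d)
    (hFp : ∀ (x : ℝ) (n : ℕ), F (x + n) = F x) :
    ∫ x in (0:ℝ)..1, F ((g:ℝ) * x) = ∫ x in (0:ℝ)..1, F x := by
  have hg' : (g:ℝ) ≠ 0 := by positivity
  rw [intervalIntegral.integral_comp_mul_left F hg', mul_zero, mul_one,
    int_sum g F hFi]
  simp_rw [hFp]
  rw [Finset.sum_const, Finset.card_range, nsmul_eq_mul, smul_eq_mul, ← mul_assoc,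
    inv_mul_cancel₀ hg', one_mul]

lemma key_step (m b : ℕ) (hab : Nat.Coprime b (2*m+1)) :
    ∫ x in (0:ℝ)..1, Cfun (((2*m+1:ℕ):ℝ) * x) * Cfun ((b:ℝ) * x)
      = (1/((2*m+1:ℕ):ℝ)^2) * ∫ x in (0:ℝ)..1, Cfun x * Cfun ((b:ℝ)*x) := by
  set a : ℕ := 2*m+1 with ha
  have hapos : 0 < a := Nat.succ_pos _
  have har : (0:ℝ) < (a:ℝ) := by positivity
  have ha' : (a:ℝ) ≠ 0 := ne_of_gt har
  set G : ℝ → ℝ := fun u => Cfun u * Cfun ((b:ℝ) * u / (a:ℝ)) with hG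
  have hGi : ∀ c d : ℝ, IntervalIntegrable G MeasureTheory.volume c d := by
    intro c d
    have := Cprod_intable 1 ((b:ℝ)/(a:ℝ)) 0 0 c d
    simpa [hG, div_mul_eq_mul_div, mul_div_assoc] using this
  have stepA : ∫ x in (0:ℝ)..1, Cfun ((a:ℝ) * x) * Cfun ((b:ℝ) * x)
      = ∫ x in (0:ℝ)..1, G ((a:ℝ) * x) := by
    apply intervalIntegral.integral_congr
    intro x _
    simp only [hG]
    congr 2
    field_simp
  have stepB : ∫ x in (0:ℝ)..1, G ((a:ℝ) * x)
      = ((a:ℝ))⁻¹ • ∫ u in (0:ℝ)..(a:ℝ), G u := by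
    rw [intervalIntegral.integral_comp_mul_left G ha', mul_zero, mul_one]
  have stepC : ∫ u in (0:ℝ)..(a:ℝ), G u
      = ∑ r ∈ Finset.range a, ∫ u in (0:ℝ)..1, G (u + r) :=
    int_sum a G hGi
  have stepD : ∑ r ∈ Finset.range a, ∫ u in (0:ℝ)..1, G (u + r)
      = ∫ u in (0:ℝ)..1, ∑ r ∈ Finset.range a, G (u + r) := by
    rw [intervalIntegral.integral_finset_sum]
    intro r _
    have := (hGi ((0:ℝ)+r) ((1:ℝ)+r)).comp_add_right (r:ℝ)
    simpa using this
  have stepE : ∀ u : ℝ, ∑ r ∈ Finset.range a, G (u + r)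
      = Cfun u * Cfun ((b:ℝ)*u) / (a:ℝ) := by
    intro u
    have e1 : ∀ r : ℕ, G (u + r)
        = Cfun u * Cfun (((b:ℝ)*u + ((((b*r : ℕ) : ℤ) + (0:ℤ) : ℤ) : ℝ))/(a:ℝ)) := by
      intro r
      simp only [hG]
      rw [Cfun_add_nat]
      congr 2
      push_cast
      field_simp
      ring
    simp_rw [e1]
    rw [← Finset.mul_sum, sum_perm a b hapos hab 0 ((b:ℝ)*u)]
    have hd : ∑ r ∈ Finset.range a, Cfun (((b:ℝ)*u + r)/(a:ℝ)) = Cfun ((b:ℝ)*u)/(a:ℝ) := by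
      rw [ha]; exact dist_rel m ((b:ℝ)*u)
    rw [hd]
    ring
  rw [stepA, stepB, stepC, stepD,
    intervalIntegral.integral_congr (g := fun u => Cfun u * Cfun ((b:ℝ)*u) / (a:ℝ))
      (fun u _ => stepE u),
    intervalIntegral.integral_div, smul_eq_mul]
  field_simp

lemma poly_int1 : ∫ x in (0:ℝ)..(1/2:ℝ), (1-4*x)*(1-4*x) = 1/6 := by
  have hd : ∀ x ∈ Set.uIcc (0:ℝ) (1/2:ℝ),
      HasDerivAt (fun x : ℝ => x - 4*x^2 + 16/3*x^3) ((1-4*x)*(1-4*x)) x := by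
    intro x _
    have h1 : HasDerivAt (fun x : ℝ => x - 4*x^2 + 16/3*x^3)
        (1 - 4*(2*x^1) + 16/3*(3*x^2)) x :=
      ((hasDerivAt_id x).sub ((hasDerivAt_pow 2 x).const_mul 4)).add
        ((hasDerivAt_pow 3 x).const_mul (16/3))
    convert h1 using 1
    ring
  rw [intervalIntegral.integral_eq_sub_of_hasDerivAt hd (by
    apply Continuous.intervalIntegrable; continuity)]
  norm_num

lemma poly_int2 : ∫ x in (1/2:ℝ)..(1:ℝ), (4*x-3)*(4*x-3) = 1/6 := by
  have hd : ∀ x ∈ Set.uIcc (1/2:ℝ) (1:ℝ),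
      HasDerivAt (fun x : ℝ => 16/3*x^3 - 12*x^2 + 9*x) ((4*x-3)*(4*x-3)) x := by
    intro x _
    have h1 : HasDerivAt (fun x : ℝ => 16/3*x^3 - 12*x^2 + 9*x)
        (16/3*(3*x^2) - 12*(2*x^1) + 9*1) x :=
      (((hasDerivAt_pow 3 x).const_mul (16/3)).sub ((hasDerivAt_pow 2 x).const_mul 12)).add
        ((hasDerivAt_id x).const_mul 9)
    convert h1 using 1
    ring
  rw [intervalIntegral.integral_eq_sub_of_hasDerivAt hd (by
    apply Continuous.intervalIntegrable; continuity)]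
  norm_num

lemma base_case : ∫ x in (0:ℝ)..1, Cfun x * Cfun x = 1/3 := by
  have hsplit : ∫ x in (0:ℝ)..1, Cfun x * Cfun x
      = (∫ x in (0:ℝ)..(1/2:ℝ), Cfun x * Cfun x)
        + ∫ x in (1/2:ℝ)..(1:ℝ), Cfun x * Cfun x := by
    rw [intervalIntegral.integral_add_adjacent_intervals] <;>
    · have := Cprod_intable 1 1 0 0
      simp only [one_mul, add_zero] at this
      apply this
  rw [hsplit]
  have h1 : ∫ x in (0:ℝ)..(1/2:ℝ), Cfun x * Cfun x
      = ∫ x in (0:ℝ)..(1/2:ℝ), (1-4*x)*(1-4*x) := by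
    apply intervalIntegral.integral_congr
    intro x hx
    rw [Set.uIcc_of_le (by norm_num)] at hx
    obtain ⟨hx0, hx1⟩ := hx
    have hfr : Int.fract x = x := Int.fract_eq_self.2 ⟨hx0, by linarith⟩
    have habs : |x - 1/2| = 1/2 - x := by rw [abs_of_nonpos (by linarith)]; ring
    simp only [Cfun]
    rw [hfr, habs]
    ring
  have h2 : ∫ x in (1/2:ℝ)..(1:ℝ), Cfun x * Cfun x
      = ∫ x in (1/2:ℝ)..(1:ℝ), (4*x-3)*(4*x-3) := by
    apply intervalIntegral.integral_congr
    intro x hx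
    rw [Set.uIcc_of_le (by norm_num)] at hx
    obtain ⟨hx0, hx1⟩ := hx
    rcases eq_or_lt_of_le hx1 with h | h
    · subst h
      have habs : |(0:ℝ) - 1/2| = 1/2 := by rw [abs_of_nonpos (by norm_num)]; norm_num
      simp only [Cfun]
      have h2 : |(1:ℝ)/2| = 1/2 := abs_of_pos (by norm_num)
      norm_num [h2]
    · have hfr : Int.fract x = x := Int.fract_eq_self.2 ⟨by linarith, h⟩
      have habs : |x - 1/2| = x - 1/2 := abs_of_nonneg (by linarith)
      simp only [Cfun]
      rw [hfr, habs]
      ring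
  rw [h1, h2, poly_int1, poly_int2]
  norm_num

lemma part2 (n : ℕ) (hn : 0 < n) :
    ∫ x in (0:ℝ)..1, Cfun ((n:ℝ) * x) * Cfun ((n:ℝ) * x) = 1/3 := by
  set F : ℝ → ℝ := fun u => Cfun u * Cfun u with hF
  have hFi : ∀ c d : ℝ, IntervalIntegrable F MeasureTheory.volume c d := by
    intro c d
    simpa [hF] using Cprod_intable 1 1 0 0 c d
  have hFp : ∀ (x : ℝ) (k : ℕ), F (x + k) = F x := by
    intro x k; simp only [hF]; rw [Cfun_add_nat]
  have h0 : (∫ x in (0:ℝ)..1, Cfun ((n:ℝ)*x) * Cfun ((n:ℝ)*x))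
      = ∫ x in (0:ℝ)..1, F ((n:ℝ)*x) := rfl
  rw [h0, scale_eq n hn F hFi hFp]
  exact base_case

lemma coprime_case (ma mb : ℕ) (hcop : Nat.Coprime (2*ma+1) (2*mb+1)) :
    ∫ x in (0:ℝ)..1, Cfun (((2*ma+1:ℕ):ℝ) * x) * Cfun (((2*mb+1:ℕ):ℝ) * x)
      = (1/((2*ma+1:ℕ):ℝ)^2) * ((1/((2*mb+1:ℕ):ℝ)^2) * (1/3)) := by
  rw [key_step ma (2*mb+1) hcop.symm]
  congr 1
  have e1 : ∫ x in (0:ℝ)..1, Cfun x * Cfun (((2*mb+1:ℕ):ℝ)*x)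
      = ∫ x in (0:ℝ)..1, Cfun (((2*mb+1:ℕ):ℝ)*x) * Cfun (((1:ℕ):ℝ)*x) := by
    apply intervalIntegral.integral_congr
    intro x _
    simp only [Nat.cast_one, one_mul]
    exact mul_comm _ _
  have e2 : ∫ x in (0:ℝ)..1, Cfun x * Cfun (((1:ℕ):ℝ)*x)
      = ∫ x in (0:ℝ)..1, Cfun x * Cfun x := by
    apply intervalIntegral.integral_congr
    intro x _
    simp only [Nat.cast_one, one_mul]
  rw [e1, key_step mb 1 (Nat.coprime_one_left _), e2, base_case]

/-- If both `i/gcd(i,j)` and `j/gcd(i,j)` are odd, then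
`3⟨𝒞_i, 𝒞_j⟩ = gcd(i,j)⁴/(i²j²)`; in particular `⟨𝒞_i, 𝒞_i⟩ = 1/3` for every `i ∈ ℕ`. -/
theorem inner_CC_of_odd_ratio (i j : ℕ) (hi : 0 < i) (hj : 0 < j)
    (h1 : Odd (i / Nat.gcd i j)) (h2 : Odd (j / Nat.gcd i j)) :
    (3 * ∫ x in (0:ℝ)..1, Cfun (i * x) * Cfun (j * x)
        = (Nat.gcd i j : ℝ) ^ 4 / ((i : ℝ) ^ 2 * (j : ℝ) ^ 2)) ∧
    (∀ n : ℕ, 0 < n → ∫ x in (0:ℝ)..1, Cfun (n * x) * Cfun (n * x) = 1 / 3) := by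
  constructor
  · set g := Nat.gcd i j with hgdef
    set a := i / g with hadef
    set b := j / g with hbdef
    have hg : 0 < g := Nat.gcd_pos_of_pos_left j hi
    have hia : a * g = i := Nat.div_mul_cancel (Nat.gcd_dvd_left i j)
    have hjb : b * g = j := Nat.div_mul_cancel (Nat.gcd_dvd_right i j)
    have hcop : Nat.Coprime a b := Nat.coprime_div_gcd_div_gcd hg
    obtain ⟨ma, hma⟩ := h1
    obtain ⟨mb, hmb⟩ := h2
    have hapos : 0 < a := by omega
    have hbpos : 0 < b := by omega
    set F : ℝ → ℝ := fun u => Cfun ((a:ℝ) * u) * Cfun ((b:ℝ) * u) with hF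
    have hFi : ∀ c d : ℝ, IntervalIntegrable F MeasureTheory.volume c d := by
      intro c d
      simpa [hF] using Cprod_intable (a:ℝ) (b:ℝ) 0 0 c d
    have hFp : ∀ (x : ℝ) (k : ℕ), F (x + k) = F x := by
      intro x k
      simp only [hF]
      have e1 : (a:ℝ)*(x+k) = (a:ℝ)*x + ((a*k : ℕ):ℝ) := by push_cast; ring
      have e2 : (b:ℝ)*(x+k) = (b:ℝ)*x + ((b*k : ℕ):ℝ) := by push_cast; ring
      rw [e1, e2, Cfun_add_nat, Cfun_add_nat]
    have main1 : ∫ x in (0:ℝ)..1, Cfun ((i:ℝ) * x) * Cfun ((j:ℝ) * x)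
        = ∫ x in (0:ℝ)..1, F ((g:ℝ) * x) := by
      apply intervalIntegral.integral_congr
      intro x _
      simp only [hF]
      have e1 : (i:ℝ)*x = (a:ℝ)*((g:ℝ)*x) := by
        rw [← hia]; push_cast; ring
      have e2 : (j:ℝ)*x = (b:ℝ)*((g:ℝ)*x) := by
        rw [← hjb]; push_cast; ring
      rw [e1, e2]
    rw [main1, scale_eq g hg F hFi hFp]
    have main2 : ∫ x in (0:ℝ)..1, F x
        = ∫ x in (0:ℝ)..1, Cfun (((2*ma+1:ℕ):ℝ) * x) * Cfun (((2*mb+1:ℕ):ℝ) * x) := by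
      apply intervalIntegral.integral_congr
      intro x _
      simp only [hF]
      rw [← hma, ← hmb]
    have hcop' : Nat.Coprime (2*ma+1) (2*mb+1) := by rw [← hma, ← hmb]; exact hcop
    rw [main2, coprime_case ma mb hcop']
    have hiar : (i:ℝ) = (a:ℝ) * (g:ℝ) := by rw [← hia]; push_cast; ring
    have hjbr : (j:ℝ) = (b:ℝ) * (g:ℝ) := by rw [← hjb]; push_cast; ring
    rw [← hma, ← hmb, hiar, hjbr]
    have har : ((a:ℕ):ℝ) ≠ 0 := by positivity
    have hbr : ((b:ℕ):ℝ) ≠ 0 := by positivity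
    have hgr : ((g:ℕ):ℝ) ≠ 0 := by positivity
    field_simp
  · intro n hn
    exact part2 n hn
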